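/- Suppose f: E(G) → E(H) is cycle-continuous and H is bridgeless. Then for every 3-edge-cut {e₁, e₂, e₃} of G, the image set {f(e₁), f(e₂), f(e₃)} is a 3-edge-cut of H (in particular the three images are distinct). -/

import Mathlib

/-- A finite multigraph: a vertex type, an edge type, and two (arbitrarily ordered)
endpoints for each edge.  Loops (`fst e = snd e`) and parallel edges are allowed. -/
structure Multigraph where
  V : Type
  E : Type
  fst : E → V
  snd : E → V
  [fintypeV : Fintype V]
  [fintypeE : Fintype E]
  [decEqV : DecidableEq V]
  [decEqE : DecidableEq E]

attribute [instance] Multigraph.fintypeV Multigraph.fintypeE Multigraph.decEqV Multigraph.decEqE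

namespace Multigraph

/-- The number of times edge `e` is incident with vertex `v` (a loop counts twice). -/
def inc (G : Multigraph) (v : G.V) (e : G.E) : ℕ :=
  (if G.fst e = v then 1 else 0) + (if G.snd e = v then 1 else 0)

/-- A set of edges is a *cycle* if every vertex is incident with an even number of
its edges (loops counted twice). -/
def IsCycle (G : Multigraph) (C : Finset G.E) : Prop :=
  ∀ v : G.V, Even (∑ e ∈ C, G.inc v e)

/-- The preimage of a finite set of edges under a mapping. -/
def preim {α β : Type} [Fintype α] [DecidableEq β] (f : α → β) (C : Finset β) : Finset α :=
  Finset.univ.filter (fun e => f e ∈ C)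

/-- A mapping `f : E(G) → E(H)` is *cycle-continuous* if the preimage of every
cycle of `H` is a cycle of `G`. -/
def CycleContinuous (G H : Multigraph) (f : G.E → H.E) : Prop :=
  ∀ C : Finset H.E, H.IsCycle C → G.IsCycle (preim f C)

instance decXor' (a b : Prop) [Decidable a] [Decidable b] : Decidable (Xor' a b) := by
  unfold Xor'; infer_instance

/-- The cut `δ(U)`: edges with exactly one endpoint in `U`. -/
def cutOf (G : Multigraph) (U : Finset G.V) : Finset G.E :=
  Finset.univ.filter (fun e => Xor' (G.fst e ∈ U) (G.snd e ∈ U))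

/-- A set of edges is a *cut* if it equals `δ(U)` for some vertex set `U`. -/
def IsCut (G : Multigraph) (C : Finset G.E) : Prop :=
  ∃ U : Finset G.V, C = G.cutOf U

/-- The set of edges incident with a vertex `v`. -/
def incidentEdges (G : Multigraph) (v : G.V) : Finset G.E :=
  Finset.univ.filter (fun e => G.fst e = v ∨ G.snd e = v)

/-- The degree of a vertex (loops counted twice). -/
def degree (G : Multigraph) (v : G.V) : ℕ := ∑ e : G.E, G.inc v e

def Cubic (G : Multigraph) : Prop := ∀ v : G.V, G.degree v = 3

/-- A graph is bridgeless if no cut consists of exactly one edge. -/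
def Bridgeless (G : Multigraph) : Prop := ∀ C : Finset G.E, G.IsCut C → C.card ≠ 1

/-- A graph is connected if it has a vertex and every nontrivial vertex set
has a nonempty cut. -/
def Connected (G : Multigraph) : Prop :=
  Nonempty G.V ∧ ∀ U : Finset G.V, U ≠ ∅ → U ≠ Finset.univ → G.cutOf U ≠ ∅

/-- `K₂³`: the graph with two vertices joined by three parallel edges. -/
def K23 : Multigraph where
  V := Bool
  E := Fin 3
  fst := fun _ => false
  snd := fun _ => true

/-- A snark: a connected cubic bridgeless graph with no cycle-continuous mapping to `K₂³`. -/
def IsSnark (G : Multigraph) : Prop :=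
  G.Cubic ∧ G.Connected ∧ G.Bridgeless ∧ ¬ ∃ f : G.E → K23.E, CycleContinuous G K23 f

/-- A proper 3-edge-coloring: distinct edges sharing a vertex get distinct colors. -/
def Proper3EdgeColorable (G : Multigraph) : Prop :=
  ∃ c : G.E → Fin 3, ∀ e e' : G.E, e ≠ e' →
    (∃ v : G.V, 0 < G.inc v e ∧ 0 < G.inc v e') → c e ≠ c e'

/-- An isomorphism of multigraphs: bijections on vertices and edges preserving
incidence (the two endpoints of an edge may be matched in either order). -/
structure Iso (G H : Multigraph) where
  φ : G.V ≃ H.V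
  ε : G.E ≃ H.E
  ends : ∀ e : G.E,
    (φ (G.fst e) = H.fst (ε e) ∧ φ (G.snd e) = H.snd (ε e)) ∨
    (φ (G.fst e) = H.snd (ε e) ∧ φ (G.snd e) = H.fst (ε e))

/-- Edge-transitivity: any edge can be carried to any other by an automorphism. -/
def EdgeTransitive (K : Multigraph) : Prop :=
  ∀ e₁ e₂ : K.E, ∃ σ : Iso K K, σ.ε e₁ = e₂

/-- Adjacency of vertices. -/
def Adj (G : Multigraph) (u v : G.V) : Prop :=
  ∃ e : G.E, (G.fst e = u ∧ G.snd e = v) ∨ (G.fst e = v ∧ G.snd e = u)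

/-- Deleting an edge. -/
def deleteEdge (G : Multigraph) (e : G.E) : Multigraph where
  V := G.V
  E := {e' : G.E // e' ≠ e}
  fst := fun e' => G.fst e'.1
  snd := fun e' => G.snd e'.1

/-- Contracting an edge `e`: its two endpoints are identified (the endpoint `snd e`
is merged into `fst e`), the loop arising from `e` is deleted, all other edges kept. -/
def contract (G : Multigraph) (e : G.E) : Multigraph where
  V := G.V
  E := {e' : G.E // e' ≠ e}
  fst := fun e' => if G.fst e'.1 = G.snd e then G.fst e else G.fst e'.1
  snd := fun e' => if G.snd e'.1 = G.snd e then G.fst e else G.snd e'.1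

/-- The 2-join of `G₁` and `G₂` along edges `e₁`, `e₂`: delete `e₁` and `e₂` and
add two new edges `x₁x₂` (coded `Sum.inr false`) and `y₁y₂` (coded `Sum.inr true`),
where `xᵢ = fst eᵢ` and `yᵢ = snd eᵢ`. -/
def twoJoin (G₁ G₂ : Multigraph) (e₁ : G₁.E) (e₂ : G₂.E) : Multigraph where
  V := G₁.V ⊕ G₂.V
  E := ({a : G₁.E // a ≠ e₁} ⊕ {b : G₂.E // b ≠ e₂}) ⊕ Bool
  fst := fun e => match e with
    | .inl (.inl a) => .inl (G₁.fst a.1)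
    | .inl (.inr b) => .inr (G₂.fst b.1)
    | .inr false => .inl (G₁.fst e₁)
    | .inr true => .inl (G₁.snd e₁)
  snd := fun e => match e with
    | .inl (.inl a) => .inl (G₁.snd a.1)
    | .inl (.inr b) => .inr (G₂.snd b.1)
    | .inr false => .inr (G₂.fst e₂)
    | .inr true => .inr (G₂.snd e₂)

/-- The natural mapping `E(G₁) → E(G₁ ≡₂ G₂)`: identity on `E(G₁) \ {e₁}`,
and `e₁` goes to the new edge `x₁x₂`. -/
def twoJoinMapL (G₁ G₂ : Multigraph) (e₁ : G₁.E) (e₂ : G₂.E) :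
    G₁.E → (twoJoin G₁ G₂ e₁ e₂).E :=
  fun a => if h : a = e₁ then .inr false else .inl (.inl ⟨a, h⟩)

/-- The natural mapping `E(G₂) → E(G₁ ≡₂ G₂)`: identity on `E(G₂) \ {e₂}`,
and `e₂` goes to the new edge `x₁x₂`. -/
def twoJoinMapR (G₁ G₂ : Multigraph) (e₁ : G₁.E) (e₂ : G₂.E) :
    G₂.E → (twoJoin G₁ G₂ e₁ e₂).E :=
  fun b => if h : b = e₂ then .inr false else .inl (.inr ⟨b, h⟩)

lemma ne_of_inc_eq_zero (G : Multigraph) {u : G.V} {e : G.E} (h : G.inc u e = 0) :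
    G.fst e ≠ u ∧ G.snd e ≠ u := by
  unfold inc at h
  constructor <;> intro he <;> simp [he] at h

/-- The endpoint of `e` other than `u`. -/
def otherEnd (G : Multigraph) (u : G.V) (e : G.E) : G.V :=
  if G.fst e = u then G.snd e else G.fst e

lemma otherEnd_ne (G : Multigraph) {u : G.V} {e : G.E} (h : G.inc u e = 1) :
    G.otherEnd u e ≠ u := by
  unfold inc at h
  unfold otherEnd
  split_ifs with hf
  · intro hs; rw [hf, hs] at h; simp at h
  · exact hf

/-- The 3-join of `G₁` and `G₂`: the degree-3 vertices `u₁`, `u₂` are deleted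
(`aᵢ j`, `j = 0,1,2`, are the three edges at `uᵢ`, none of them a loop, and all other
edges avoid `uᵢ`), and three new matching edges (coded `Sum.inr j`) are added, the
`j`-th joining the other endpoint of `a₁ j` to the other endpoint of `a₂ j`. -/
def threeJoin (G₁ G₂ : Multigraph) (u₁ : G₁.V) (u₂ : G₂.V)
    (a₁ : Fin 3 → G₁.E) (a₂ : Fin 3 → G₂.E)
    (h₁ : ∀ j, G₁.inc u₁ (a₁ j) = 1) (h₂ : ∀ j, G₂.inc u₂ (a₂ j) = 1)
    (hz₁ : ∀ e, (∀ j, e ≠ a₁ j) → G₁.inc u₁ e = 0)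
    (hz₂ : ∀ e, (∀ j, e ≠ a₂ j) → G₂.inc u₂ e = 0) : Multigraph where
  V := {v : G₁.V // v ≠ u₁} ⊕ {v : G₂.V // v ≠ u₂}
  E := ({e : G₁.E // ∀ j, e ≠ a₁ j} ⊕ {e : G₂.E // ∀ j, e ≠ a₂ j}) ⊕ Fin 3
  fst := fun e => match e with
    | .inl (.inl a) => .inl ⟨G₁.fst a.1, (ne_of_inc_eq_zero G₁ (hz₁ a.1 a.2)).1⟩
    | .inl (.inr b) => .inr ⟨G₂.fst b.1, (ne_of_inc_eq_zero G₂ (hz₂ b.1 b.2)).1⟩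
    | .inr j => .inl ⟨G₁.otherEnd u₁ (a₁ j), otherEnd_ne G₁ (h₁ j)⟩
  snd := fun e => match e with
    | .inl (.inl a) => .inl ⟨G₁.snd a.1, (ne_of_inc_eq_zero G₁ (hz₁ a.1 a.2)).2⟩
    | .inl (.inr b) => .inr ⟨G₂.snd b.1, (ne_of_inc_eq_zero G₂ (hz₂ b.1 b.2)).2⟩
    | .inr j => .inr ⟨G₂.otherEnd u₂ (a₂ j), otherEnd_ne G₂ (h₂ j)⟩

/-- The natural mapping `E(G₁) → E(G₁ ≡ G₂)`: identity on edges not incident with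
`u₁`, and the edge `a₁ j` at `u₁` goes to the `j`-th added matching edge. -/
noncomputable def threeJoinMapL (G₁ G₂ : Multigraph) (u₁ : G₁.V) (u₂ : G₂.V)
    (a₁ : Fin 3 → G₁.E) (a₂ : Fin 3 → G₂.E)
    (h₁ : ∀ j, G₁.inc u₁ (a₁ j) = 1) (h₂ : ∀ j, G₂.inc u₂ (a₂ j) = 1)
    (hz₁ : ∀ e, (∀ j, e ≠ a₁ j) → G₁.inc u₁ e = 0)
    (hz₂ : ∀ e, (∀ j, e ≠ a₂ j) → G₂.inc u₂ e = 0) :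
    G₁.E → (threeJoin G₁ G₂ u₁ u₂ a₁ a₂ h₁ h₂ hz₁ hz₂).E :=
  fun e => if h : ∀ j, e ≠ a₁ j then .inl (.inl ⟨e, h⟩)
    else .inr (Classical.choose (by push_neg at h; exact h))

/-- The natural mapping `E(G₂) → E(G₁ ≡ G₂)`. -/
noncomputable def threeJoinMapR (G₁ G₂ : Multigraph) (u₁ : G₁.V) (u₂ : G₂.V)
    (a₁ : Fin 3 → G₁.E) (a₂ : Fin 3 → G₂.E)
    (h₁ : ∀ j, G₁.inc u₁ (a₁ j) = 1) (h₂ : ∀ j, G₂.inc u₂ (a₂ j) = 1)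
    (hz₁ : ∀ e, (∀ j, e ≠ a₁ j) → G₁.inc u₁ e = 0)
    (hz₂ : ∀ e, (∀ j, e ≠ a₂ j) → G₂.inc u₂ e = 0) :
    G₂.E → (threeJoin G₁ G₂ u₁ u₂ a₁ a₂ h₁ h₂ hz₁ hz₂).E :=
  fun e => if h : ∀ j, e ≠ a₂ j then .inl (.inr ⟨e, h⟩)
    else .inr (Classical.choose (by push_neg at h; exact h))

/-- The set of edges of `H` to which an odd number of edges of `C ⊆ E(G)` map. -/
def oddImage (G H : Multigraph) (f : G.E → H.E) (C : Finset G.E) : Finset H.E :=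
  Finset.univ.filter (fun e' => Odd ((C.filter (fun e => f e = e')).card))

end Multigraph

open Matrix
open Matrix

-- factor a functional through a linear map whose kernel it kills
private lemma factor_functional {K M N : Type*} [Field K] [AddCommGroup M] [Module K M]
    [AddCommGroup N] [Module K N] (f : M →ₗ[K] N) (φ : M →ₗ[K] K)
    (h : LinearMap.ker f ≤ LinearMap.ker φ) :
    ∃ ψ : N →ₗ[K] K, ∀ m, ψ (f m) = φ m := by
  obtain ⟨ψ, hψ⟩ := (((LinearMap.ker f).liftQ φ h) ∘ₗ
      (f.quotKerEquivRange.symm : _ ≃ₗ[K] _).toLinearMap).exists_extend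
  refine ⟨ψ, fun m => ?_⟩
  have h1 : ψ (f m) = (ψ ∘ₗ (LinearMap.range f).subtype) ⟨f m, LinearMap.mem_range_self f m⟩ := rfl
  rw [h1, hψ]
  simp [LinearMap.quotKerEquivRange_symm_apply_image, Submodule.liftQ_apply]

private lemma dual_eq_dot {K : Type*} [Field K] {ι : Type} [Fintype ι] [DecidableEq ι]
    (ψ : (ι → K) →ₗ[K] K) (z : ι → K) :
    ψ z = ∑ i, z i * ψ (Pi.single i 1) := by
  have hz : z = ∑ i, z i • (Pi.single i 1 : ι → K) := by
    funext j
    simp [Finset.sum_apply, Pi.single_apply]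
  conv_lhs => rw [hz]
  rw [map_sum]
  simp [smul_eq_mul]

private lemma mem_range_transpose {K : Type*} [Field K] {m n : Type} [Fintype m] [Fintype n]
    [DecidableEq m] [DecidableEq n] (B : Matrix m n K) (x : n → K)
    (hx : ∀ z : n → K, B.mulVec z = 0 → x ⬝ᵥ z = 0) :
    ∃ y : m → K, Bᵀ.mulVec y = x := by
  let φ : (n → K) →ₗ[K] K :=
    { toFun := fun z => x ⬝ᵥ z
      map_add' := fun a b => dotProduct_add x a b
      map_smul' := fun c a => by simp [dotProduct_smul, smul_eq_mul] }
  have hker : LinearMap.ker B.mulVecLin ≤ LinearMap.ker φ := by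
    intro z hz
    simp only [LinearMap.mem_ker, Matrix.mulVecLin_apply] at hz ⊢
    exact hx z hz
  obtain ⟨ψ, hψ⟩ := factor_functional B.mulVecLin φ hker
  refine ⟨fun v => ψ (Pi.single v 1), ?_⟩
  funext e
  have h1 : x e = φ (Pi.single e 1) := by simp [φ, dotProduct_single]
  have h2 : φ (Pi.single e 1) = ψ (B.mulVec (Pi.single e 1)) := (hψ _).symm
  rw [h1, h2, dual_eq_dot ψ, mulVec_single]
  simp [Matrix.mulVec, dotProduct, Matrix.transpose_apply, mul_comm]

open Matrix Multigraph

private def incMat (H : Multigraph) : Matrix H.V H.E (ZMod 2) := fun v e => (H.inc v e : ZMod 2)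

private def chi (H : Multigraph) (T : Finset H.E) : H.E → ZMod 2 := fun e => if e ∈ T then 1 else 0

private lemma even_iff_cast_zero (n : ℕ) : Even n ↔ (n : ZMod 2) = 0 := by
  rw [ZMod.natCast_eq_zero_iff, even_iff_two_dvd]

private lemma mulVec_chi (H : Multigraph) (S : Finset H.E) (v : H.V) :
    (incMat H).mulVec (chi H S) v = ((∑ e ∈ S, H.inc v e : ℕ) : ZMod 2) := by
  simp only [Matrix.mulVec, dotProduct, incMat, chi, mul_ite, mul_one, mul_zero,
    Nat.cast_sum]
  rw [Finset.sum_ite_mem, Finset.univ_inter]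

private lemma cycle_iff_mulVec (H : Multigraph) (S : Finset H.E) :
    H.IsCycle S ↔ (incMat H).mulVec (chi H S) = 0 := by
  constructor
  · intro h; funext v
    rw [mulVec_chi, Pi.zero_apply, ← even_iff_cast_zero]; exact h v
  · intro h v; rw [even_iff_cast_zero, ← mulVec_chi H S v, h, Pi.zero_apply]

private lemma zmod2_add_one : ∀ a b : ZMod 2, a + b = 1 ↔ Xor' (a = 1) (b = 1) := by decide

private lemma inc_sum_U (G : Multigraph) (U : Finset G.V) (e : G.E) :
    ∑ v ∈ U, ((G.inc v e : ℕ) : ZMod 2)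
      = (if G.fst e ∈ U then (1 : ZMod 2) else 0) + (if G.snd e ∈ U then 1 else 0) := by
  simp only [inc, Nat.cast_add, Nat.cast_ite, Nat.cast_one, Nat.cast_zero,
    Finset.sum_add_distrib, Finset.sum_ite_eq]

-- orthogonality of cuts and cycles
private lemma even_cut_inter_cycle (G : Multigraph) (U : Finset G.V) (S : Finset G.E)
    (hS : G.IsCycle S) : Even (((G.cutOf U).filter (· ∈ S)).card) := by
  rw [even_iff_cast_zero]
  have h0 : (G.cutOf U).filter (· ∈ S) = S.filter (· ∈ G.cutOf U) := by
    ext e; simp [Finset.mem_filter, and_comm]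
  rw [h0, Finset.card_filter, Nat.cast_sum]
  have h1 : ∀ e ∈ S, (((if e ∈ G.cutOf U then 1 else 0 : ℕ)) : ZMod 2)
      = ∑ v ∈ U, ((G.inc v e : ℕ) : ZMod 2) := by
    intro e _
    rw [inc_sum_U]
    have hm : e ∈ G.cutOf U ↔ Xor' (G.fst e ∈ U) (G.snd e ∈ U) := by
      unfold cutOf; rw [Finset.mem_filter]; simp
    by_cases h1 : G.fst e ∈ U <;> by_cases h2 : G.snd e ∈ U <;>
      simp [hm, Xor', h1, h2] <;> decide
  rw [Finset.sum_congr rfl h1, Finset.sum_comm]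
  have h2 : ∀ v ∈ U, ∑ e ∈ S, ((G.inc v e : ℕ) : ZMod 2) = 0 := by
    intro v _
    rw [← Nat.cast_sum, ← even_iff_cast_zero]
    exact hS v
  rw [Finset.sum_congr rfl h2, Finset.sum_const, smul_zero]

private lemma zmod2_cases : ∀ a : ZMod 2, a = 0 ∨ a = 1 := by decide

private lemma isCut_of_even_inter (H : Multigraph) (T : Finset H.E)
    (h : ∀ D : Finset H.E, H.IsCycle D → Even ((T.filter (· ∈ D)).card)) : H.IsCut T := by
  -- chi T is orthogonal to the kernel of incMat
  have hx : ∀ z : H.E → ZMod 2, (incMat H).mulVec z = 0 → chi H T ⬝ᵥ z = 0 := by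
    intro z hz
    set D : Finset H.E := Finset.univ.filter (fun e => z e = 1) with hD
    have hzD : z = chi H D := by
      funext e
      rcases zmod2_cases (z e) with h0 | h0 <;> simp [chi, hD, h0]
    have hcyc : H.IsCycle D := by
      rw [cycle_iff_mulVec, ← hzD]; exact hz
    have hcard := h D hcyc
    rw [even_iff_cast_zero] at hcard
    rw [hzD]
    have hTD : chi H T ⬝ᵥ chi H D = ((T ∩ D).card : ZMod 2) := by
      simp [dotProduct, chi, ite_and, Finset.inter_comm]
    rw [hTD, ← Finset.filter_mem_eq_inter]
    exact hcard
  obtain ⟨y, hy⟩ := mem_range_transpose (incMat H) (chi H T) hx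
  refine ⟨Finset.univ.filter (fun v => y v = 1), ?_⟩
  ext e
  have he : chi H T e = y (H.fst e) + y (H.snd e) := by
    rw [← hy]
    simp only [Matrix.mulVec, dotProduct, Matrix.transpose_apply, incMat, inc,
      Nat.cast_add, Nat.cast_ite, Nat.cast_one, Nat.cast_zero, add_mul, ite_mul, one_mul,
      zero_mul, Finset.sum_add_distrib, Finset.sum_ite_eq, Finset.mem_univ, if_true]
  simp only [cutOf, Finset.mem_filter, Finset.mem_univ, true_and]
  constructor
  · intro hT
    have : chi H T e = 1 := by simp [chi, hT]
    rw [he, zmod2_add_one] at this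
    simpa using this
  · intro hXor
    have h2 : y (H.fst e) + y (H.snd e) = 1 := by
      rw [zmod2_add_one]; simpa using hXor
    have h1 : chi H T e = 1 := by rw [he, h2]
    by_contra hT
    simp [chi, hT] at h1

private lemma card_filter_triple {α : Type} [DecidableEq α] (a b c : α)
    (hab : a ≠ b) (hac : a ≠ c) (hbc : b ≠ c) (p : α → Prop) [DecidablePred p] :
    (({a, b, c} : Finset α).filter p).card
      = (if p a then 1 else 0) + (if p b then 1 else 0) + (if p c then 1 else 0) := by
  rw [Finset.card_filter, Finset.sum_insert (by simp [hab, hac]),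
    Finset.sum_insert (by simp [hbc]), Finset.sum_singleton, add_assoc]

private lemma card_filter_singleton {α : Type} [DecidableEq α] (a : α) (p : α → Prop)
    [DecidablePred p] :
    (({a} : Finset α).filter p).card = (if p a then 1 else 0) := by
  rw [Finset.filter_singleton]
  split <;> simp


open Multigraph in
/-- a cycle-continuous mapping to a bridgeless graph sends 3-edge-cuts
to 3-edge-cuts, the three images being distinct. -/
theorem image_of_threeCut (G H : Multigraph) (f : G.E → H.E)
    (hf : CycleContinuous G H f) (hH : H.Bridgeless)
    (e₁ e₂ e₃ : G.E) (h12 : e₁ ≠ e₂) (h13 : e₁ ≠ e₃) (h23 : e₂ ≠ e₃)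
    (hcut : G.IsCut {e₁, e₂, e₃}) :
    f e₁ ≠ f e₂ ∧ f e₁ ≠ f e₃ ∧ f e₂ ≠ f e₃ ∧ H.IsCut {f e₁, f e₂, f e₃} := by
  obtain ⟨U, hU⟩ := hcut
  have hB : ∀ D : Finset H.E, H.IsCycle D →
      Even ((if f e₁ ∈ D then 1 else 0) + (if f e₂ ∈ D then 1 else 0)
        + (if f e₃ ∈ D then 1 else 0)) := by
    intro D hD
    have h := even_cut_inter_cycle G U (preim f D) (hf D hD)
    rw [← hU] at h
    rw [card_filter_triple e₁ e₂ e₃ h12 h13 h23] at h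
    simpa only [preim, Finset.mem_filter, Finset.mem_univ, true_and] using h
  have d12 : f e₁ ≠ f e₂ := by
    intro heq
    refine hH {f e₃} (isCut_of_even_inter H _ fun D hD => ?_) (by simp)
    have h := hB D hD
    rw [heq] at h
    rw [card_filter_singleton, Nat.even_iff]
    rw [Nat.even_iff] at h
    split_ifs at h ⊢ <;> omega
  have d13 : f e₁ ≠ f e₃ := by
    intro heq
    refine hH {f e₂} (isCut_of_even_inter H _ fun D hD => ?_) (by simp)
    have h := hB D hD
    rw [heq] at h
    rw [card_filter_singleton, Nat.even_iff]
    rw [Nat.even_iff] at h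
    split_ifs at h ⊢ <;> omega
  have d23 : f e₂ ≠ f e₃ := by
    intro heq
    refine hH {f e₁} (isCut_of_even_inter H _ fun D hD => ?_) (by simp)
    have h := hB D hD
    rw [heq] at h
    rw [card_filter_singleton, Nat.even_iff]
    rw [Nat.even_iff] at h
    split_ifs at h ⊢ <;> omega
  refine ⟨d12, d13, d23, isCut_of_even_inter H _ fun D hD => ?_⟩
  rw [card_filter_triple _ _ _ d12 d13 d23]
  exact hB D hD
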